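/- Let V = ℂ[X,Y]_k with k ≥ 2, with the standard sl₂(ℂ)-action by operators E_k, H_k, F_k where E_k·eᵢ = (k−i)e_{i+1}, H_k·eᵢ = (2i−k)eᵢ, F_k·eᵢ = i·e_{i−1}. Let U = span⟨e_j, …, e_k⟩ with j > 1. Then for any finite collection of elements x₁, …, x_m ∈ sl₂(ℂ), the subspace U + ∑ᵢ ρ(xᵢ)·U is contained in span⟨e_{j−1}, …, e_k⟩ and in particular never equals V. -/

import Mathlib

/-- The lowering operator `F_k`: `F_k · e_i = i · e_{i-1}`, i.e. `(F_k x)_m = (m+1) x_{m+1}`. -/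
noncomputable def lowerOp (k : ℕ) : Module.End ℂ (Fin (k + 1) → ℂ) where
  toFun x := fun m =>
    if h : (m : ℕ) < k then (((m : ℕ) + 1 : ℕ) : ℂ) * x ⟨(m : ℕ) + 1, by omega⟩ else 0
  map_add' x y := by
    funext m; by_cases h : (m : ℕ) < k <;> simp [h, mul_add]
  map_smul' c x := by
    funext m; by_cases h : (m : ℕ) < k <;> simp [h] <;> ring

/-- The raising operator `E_k`: `E_k · e_i = (k − i) e_{i+1}`, i.e.
`(E_k x)_m = (k − (m−1)) x_{m−1}` for `m ≥ 1`. -/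
noncomputable def raiseOp (k : ℕ) : Module.End ℂ (Fin (k + 1) → ℂ) where
  toFun x := fun m =>
    if h : 0 < (m : ℕ) then ((k - ((m : ℕ) - 1) : ℕ) : ℂ) * x ⟨(m : ℕ) - 1, by omega⟩ else 0
  map_add' x y := by
    funext m; simp only [Pi.add_apply]; split_ifs <;> ring
  map_smul' c x := by
    funext m; simp only [Pi.smul_apply, smul_eq_mul, RingHom.id_apply]; split_ifs <;> ring

/-- The Cartan operator `H_k`: `H_k · e_i = (2i − k) e_i`. -/
noncomputable def cartanOp (k : ℕ) : Module.End ℂ (Fin (k + 1) → ℂ) where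
  toFun x := fun m => ((2 * (m : ℕ) : ℕ) - (k : ℂ)) * x m
  map_add' x y := by funext m; simp [mul_add]
  map_smul' c x := by funext m; simp; ring


noncomputable def vanishLow (k c : ℕ) : Submodule ℂ (Fin (k + 1) → ℂ) where
  carrier := {v | ∀ m : Fin (k + 1), (m : ℕ) < c → v m = 0}
  add_mem' := fun ha hb m hm => by simp [Pi.add_apply, ha m hm, hb m hm]
  zero_mem' := fun m hm => rfl
  smul_mem' := fun r v hv m hm => by simp [hv m hm]

lemma mem_vanishLow {k c : ℕ} {v : Fin (k+1) → ℂ} :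
    v ∈ vanishLow k c ↔ ∀ m : Fin (k + 1), (m : ℕ) < c → v m = 0 := Iff.rfl

lemma span_le_vanishLow (k c : ℕ) :
    Submodule.span ℂ {v : Fin (k + 1) → ℂ | ∃ t : Fin (k + 1), c ≤ (t : ℕ) ∧ v = Pi.single t 1}
      ≤ vanishLow k c := by
  rw [Submodule.span_le]
  rintro v ⟨t, ht, rfl⟩ m hm
  exact Pi.single_eq_of_ne (Fin.ne_of_val_ne (by omega)) 1

lemma vanishLow_le_span (k c : ℕ) :
    vanishLow k c ≤
    Submodule.span ℂ {v : Fin (k + 1) → ℂ | ∃ t : Fin (k + 1), c ≤ (t : ℕ) ∧ v = Pi.single t 1} := by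
  intro v hv
  have hrep : v = ∑ t : Fin (k+1), v t • (Pi.single t 1 : Fin (k+1) → ℂ) := by
    funext n
    simp [Finset.sum_apply, Pi.single_apply]
  rw [hrep]
  apply Submodule.sum_mem
  intro t _
  by_cases h : c ≤ (t : ℕ)
  · exact Submodule.smul_mem _ _ (Submodule.subset_span ⟨t, h, rfl⟩)
  · rw [hv t (by omega)]
    simp

lemma gens_map {k j : ℕ} (hj : 1 < j) (A : Module.End ℂ (Fin (k + 1) → ℂ))
    (hA : A ∈ Submodule.span ℂ {raiseOp k, cartanOp k, lowerOp k}) :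
    ∀ t : Fin (k + 1), j ≤ (t : ℕ) → A (Pi.single t 1) ∈ vanishLow k (j - 1) := by
  induction hA using Submodule.span_induction with
  | mem A hA =>
    intro t ht n hn
    rcases hA with rfl | rfl | rfl
    · show (raiseOp k) (Pi.single t 1) n = 0
      simp only [raiseOp, LinearMap.coe_mk, AddHom.coe_mk]
      split
      · rw [Pi.single_eq_of_ne (Fin.ne_of_val_ne (show ((n:ℕ) - 1) ≠ (t:ℕ) by omega)) 1,
          mul_zero]
      · rfl
    · show (cartanOp k) (Pi.single t 1) n = 0
      simp only [cartanOp, LinearMap.coe_mk, AddHom.coe_mk]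
      rw [Pi.single_eq_of_ne (Fin.ne_of_val_ne (by omega)) 1, mul_zero]
    · show (lowerOp k) (Pi.single t 1) n = 0
      simp only [lowerOp, LinearMap.coe_mk, AddHom.coe_mk]
      split
      · rw [Pi.single_eq_of_ne (Fin.ne_of_val_ne (show ((n:ℕ) + 1) ≠ (t:ℕ) by omega)) 1,
          mul_zero]
      · rfl
  | zero => intro t ht; simp [Submodule.zero_mem]
  | add A B _ _ hA hB =>
    intro t ht
    simpa using Submodule.add_mem _ (hA t ht) (hB t ht)
  | smul c A _ hA =>
    intro t ht
    simpa using Submodule.smul_mem _ c (hA t ht)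

theorem stmt_16 (k j : ℕ) (hk : 2 ≤ k) (hj : 1 < j) (hjk : j ≤ k)
    (U : Submodule ℂ (Fin (k + 1) → ℂ))
    (hU : U = Submodule.span ℂ
      {v : Fin (k + 1) → ℂ | ∃ t : Fin (k + 1), j ≤ (t : ℕ) ∧ v = Pi.single t 1}) :
    ∀ (m : ℕ) (T : Fin m → Module.End ℂ (Fin (k + 1) → ℂ)),
      (∀ i, T i ∈ Submodule.span ℂ {raiseOp k, cartanOp k, lowerOp k}) →
        (U ⊔ ⨆ i, Submodule.map (T i) U) ≤
          Submodule.span ℂ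
            {v : Fin (k + 1) → ℂ | ∃ t : Fin (k + 1), j - 1 ≤ (t : ℕ) ∧ v = Pi.single t 1} ∧
        (U ⊔ ⨆ i, Submodule.map (T i) U) ≠ ⊤ := by
  intro m T hT
  have hle : (U ⊔ ⨆ i, Submodule.map (T i) U) ≤ vanishLow k (j - 1) := by
    apply sup_le
    · rw [hU]
      refine le_trans (Submodule.span_mono ?_) (span_le_vanishLow k (j - 1))
      rintro v ⟨t, ht, rfl⟩
      exact ⟨t, by omega, rfl⟩
    · apply iSup_le
      intro i
      rw [Submodule.map_le_iff_le_comap, hU, Submodule.span_le]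
      rintro v ⟨t, ht, rfl⟩
      exact gens_map hj (T i) (hT i) t ht
  constructor
  · exact le_trans hle (vanishLow_le_span k (j - 1))
  · intro htop
    rw [htop] at hle
    have h1 : (Pi.single (0 : Fin (k + 1)) 1 : Fin (k + 1) → ℂ) ∈ vanishLow k (j - 1) :=
      hle Submodule.mem_top
    have := h1 0 (by simp only [Fin.val_zero]; omega)
    simp at this
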